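/- The only parts of 0 are 0 and *: if X + Y is misère-equal to 0, then X is misère-equal to 0 or to *, and likewise Y is misère-equal to 0 or to *. -/

import Mathlib

inductive IGame : Type where
  | mk : List IGame → IGame

namespace IGame

/-- The options of a game. -/
def opts : IGame → List IGame
  | mk l => l

theorem sizeOf_lt_of_mem {x : IGame} {l : List IGame} (h : x ∈ l) :
    sizeOf x < sizeOf (mk l) := by
  have := List.sizeOf_lt_of_mem h
  simp only [mk.sizeOf_spec]
  omega

/-- `x` is an option of `G`. -/
def IsOption (x G : IGame) : Prop := x ∈ G.opts

/-- The empty game `0`. -/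
def zero : IGame := mk []

/-- The game `* = {0}`. -/
def star : IGame := mk [zero]

/-- The game `*2 = {0, *}`. -/
def star2 : IGame := mk [zero, star]

/-- The game `*3 = {0, *, *2}`. -/
def star3 : IGame := mk [zero, star, star2]

/-- Disjunctive sum of games. -/
def add : IGame → IGame → IGame
  | mk l, mk r =>
    mk ((l.attach.map fun x => add x.1 (mk r)) ++
        (r.attach.map fun y => add (mk l) y.1))
termination_by G H => (sizeOf G, sizeOf H)
decreasing_by
  · exact Prod.Lex.left _ _ (sizeOf_lt_of_mem x.2)
  · exact Prod.Lex.right _ (sizeOf_lt_of_mem y.2)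

/-- `MisereP G` holds iff the misère outcome of `G` is `P`
(i.e. `G` has at least one option and no option is a `P`-position). -/
def MisereP : IGame → Prop
  | mk l => l ≠ [] ∧ ∀ x ∈ l, ¬ MisereP x
termination_by G => sizeOf G
decreasing_by exact sizeOf_lt_of_mem (by assumption)

/-- Misère equality of games. -/
def MEquiv (G H : IGame) : Prop :=
  ∀ X : IGame, MisereP (add G X) ↔ MisereP (add H X)

theorem mequiv_refl (G : IGame) : MEquiv G G := fun _ => Iff.rfl
theorem mequiv_symm {G H : IGame} (h : MEquiv G H) : MEquiv H G := fun X => (h X).symm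
theorem mequiv_trans {G H K : IGame} (h₁ : MEquiv G H) (h₂ : MEquiv H K) :
    MEquiv G K := fun X => (h₁ X).trans (h₂ X)

/-- `G` is linked to `H` if `G + T` and `H + T` are both misère `P`-positions for some `T`. -/
def Linked (G H : IGame) : Prop :=
  ∃ T : IGame, MisereP (add G T) ∧ MisereP (add H T)

/-- `H` is a part of `G` if `G = H + X` (misère-equal) for some `X`. -/
def IsPart (H G : IGame) : Prop :=
  ∃ X : IGame, MEquiv G (add H X)

/-- `G` has a reversible option: some option `G'` of `G` has an option `G''` misère-equal
to `G`. -/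
def HasReversibleOption (G : IGame) : Prop :=
  ∃ G' ∈ G.opts, ∃ G'' ∈ G'.opts, MEquiv G'' G

/-- `G` is in simplest (canonical) form: neither `G` nor any of its hereditary
subpositions has a reversible option. -/
def Canonical (G : IGame) : Prop :=
  ∀ H : IGame, Relation.ReflTransGen IsOption H G → ¬ HasReversibleOption H

/-- `G` is even if the simplest form of `G` occurs as an option of the simplest form of
`G + *`. -/
def EvenG (G : IGame) : Prop :=
  ∃ K L : IGame, Canonical K ∧ MEquiv K G ∧ Canonical L ∧ MEquiv L (add G star) ∧
    IsOption K L

/-- `G` is odd if `G + *` is even. -/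
def OddG (G : IGame) : Prop := EvenG (add G star)

/-- A unit is a game with an additive inverse (up to misère equality). -/
def IsUnitG (U : IGame) : Prop :=
  ∃ V : IGame, MEquiv (add U V) zero

/-- `G` and `H` are associates if they differ by a unit. -/
def Assoc (G H : IGame) : Prop :=
  ∃ U : IGame, IsUnitG U ∧ MEquiv G (add H U)

/-- `G` is prime if `G` is not a unit and every part of `G` is associated to `0` or
to `G`. -/
def PrimeG (G : IGame) : Prop :=
  ¬ IsUnitG G ∧ ∀ H : IGame, IsPart H G → Assoc H zero ∨ Assoc H G

/-- The sum `n · G` of `n` copies of `G`. -/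
def nsmul : ℕ → IGame → IGame
  | 0, _ => zero
  | n + 1, G => add G (nsmul n G)

/-- The sum of a list of games. -/
def listSum (L : List IGame) : IGame := L.foldr add zero

/-- The mate `G⁻` of `G`. -/
def mate : IGame → IGame
  | mk [] => star
  | mk (x :: l) => mk ((x :: l).attach.map fun y => mate y.1)
termination_by G => sizeOf G
decreasing_by exact sizeOf_lt_of_mem y.2

/-- The formal birthday of a game. -/
def fbd : IGame → ℕ
  | mk l => (l.attach.map fun x => fbd x.1 + 1).foldr max 0
termination_by G => sizeOf G
decreasing_by exact sizeOf_lt_of_mem x.2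

/-- The birthday of a game: the least formal birthday among all misère-equal games. -/
noncomputable def birthday (G : IGame) : ℕ :=
  sInf (fbd '' {H : IGame | MEquiv G H})

instance setoid : Setoid IGame :=
  ⟨MEquiv, fun _ => mequiv_refl _, mequiv_symm, mequiv_trans⟩

/-- The monoid of misère impartial game values: games modulo misère equality. -/
def MGame := Quotient setoid

theorem add_eq (l r : List IGame) :
    add (mk l) (mk r) =
      mk (l.map (fun x => add x (mk r)) ++ r.map (fun y => add (mk l) y)) := by
  rw [add]
  simp [List.attach_map_val]

theorem opts_add (G H : IGame) :
    (add G H).opts = G.opts.map (fun x => add x H) ++ H.opts.map (fun y => add G y) := by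
  obtain ⟨l⟩ := G; obtain ⟨r⟩ := H
  rw [add_eq]; rfl

theorem MisereP_mk (l : List IGame) :
    MisereP (mk l) ↔ l ≠ [] ∧ ∀ x ∈ l, ¬ MisereP x := by
  rw [MisereP]

theorem MisereP_iff (G : IGame) :
    MisereP G ↔ G.opts ≠ [] ∧ ∀ x ∈ G.opts, ¬ MisereP x := by
  obtain ⟨l⟩ := G; exact MisereP_mk l

theorem one_le_sizeOf (G : IGame) : 1 ≤ sizeOf G := by
  obtain ⟨l⟩ := G; rw [mk.sizeOf_spec]; omega

theorem MisereP_add (G H : IGame) :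
    MisereP (add G H) ↔ (G.opts ≠ [] ∨ H.opts ≠ []) ∧
      (∀ x ∈ G.opts, ¬ MisereP (add x H)) ∧ (∀ y ∈ H.opts, ¬ MisereP (add G y)) := by
  rw [MisereP_iff, opts_add]
  constructor
  · rintro ⟨hne, hall⟩
    refine ⟨?_, fun x hx => hall _ (List.mem_append_left _ (List.mem_map_of_mem hx)),
      fun y hy => hall _ (List.mem_append_right _ (List.mem_map_of_mem hy))⟩
    by_contra hc
    push_neg at hc
    simp [hc.1, hc.2] at hne
  · rintro ⟨hne, h1, h2⟩
    constructor
    · simp only [ne_eq, List.append_eq_nil_iff, List.map_eq_nil_iff, not_and]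
      rcases hne with h | h
      · intro hh; exact absurd hh h
      · intro _; exact h
    · intro x hx
      rcases List.mem_append.1 hx with hh | hh
      · obtain ⟨a, ha, rfl⟩ := List.mem_map.1 hh
        exact h1 a ha
      · obtain ⟨a, ha, rfl⟩ := List.mem_map.1 hh
        exact h2 a ha

theorem not_MisereP_add_left {G H x : IGame} (hx : x ∈ G.opts)
    (h : MisereP (add x H)) : ¬ MisereP (add G H) := by
  rw [MisereP_add]
  intro ⟨_, h2, _⟩
  exact h2 x hx h

theorem not_MisereP_add_right {G H y : IGame} (hy : y ∈ H.opts)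
    (h : MisereP (add G y)) : ¬ MisereP (add G H) := by
  rw [MisereP_add]
  intro ⟨_, _, h3⟩
  exact h3 y hy h
theorem sizeOf_opt {x G : IGame} (h : x ∈ G.opts) : sizeOf x < sizeOf G := by
  obtain ⟨l⟩ := G; exact sizeOf_lt_of_mem h

theorem opts_zero : zero.opts = [] := rfl

theorem p_zero_add (X : IGame) : MisereP (add zero X) ↔ MisereP X := by
  have key : ∀ n X, sizeOf X ≤ n → (MisereP (add zero X) ↔ MisereP X) := by
    intro n
    induction n with
    | zero => intro X hX; have := one_le_sizeOf X; omega
    | succ n ih =>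
      intro X hX
      rw [MisereP_add, MisereP_iff, opts_zero]
      constructor
      · rintro ⟨hne, -, h2⟩
        refine ⟨by tauto, fun x hx => ?_⟩
        have hs : sizeOf x ≤ n := by have := sizeOf_opt hx; omega
        exact fun hp => h2 x hx ((ih x hs).2 hp)
      · rintro ⟨hne, h2⟩
        refine ⟨Or.inr hne, by simp, fun x hx => ?_⟩
        have hs : sizeOf x ≤ n := by have := sizeOf_opt hx; omega
        exact fun hp => h2 x hx ((ih x hs).1 hp)
  exact key (sizeOf X) X le_rfl

theorem p_add_zero (X : IGame) : MisereP (add X zero) ↔ MisereP X := by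
  have key : ∀ n X, sizeOf X ≤ n → (MisereP (add X zero) ↔ MisereP X) := by
    intro n
    induction n with
    | zero => intro X hX; have := one_le_sizeOf X; omega
    | succ n ih =>
      intro X hX
      rw [MisereP_add, MisereP_iff, opts_zero]
      constructor
      · rintro ⟨hne, h2, -⟩
        refine ⟨by tauto, fun x hx => ?_⟩
        have hs : sizeOf x ≤ n := by have := sizeOf_opt hx; omega
        exact fun hp => h2 x hx ((ih x hs).2 hp)
      · rintro ⟨hne, h2⟩
        refine ⟨Or.inl hne, fun x hx => ?_, by simp⟩
        have hs : sizeOf x ≤ n := by have := sizeOf_opt hx; omega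
        exact fun hp => h2 x hx ((ih x hs).1 hp)
  exact key (sizeOf X) X le_rfl

theorem p_add_assoc (A B C : IGame) :
    MisereP (add (add A B) C) ↔ MisereP (add A (add B C)) := by
  have key : ∀ n A B C, sizeOf A + sizeOf B + sizeOf C ≤ n →
      (MisereP (add (add A B) C) ↔ MisereP (add A (add B C))) := by
    intro n
    induction n with
    | zero =>
      intro A B C h
      have := one_le_sizeOf A; have := one_le_sizeOf B; have := one_le_sizeOf C; omega
    | succ n ih =>
      intro A B C h
      have iA : ∀ a ∈ A.opts, (MisereP (add (add a B) C) ↔ MisereP (add a (add B C))) :=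
        fun a ha => ih a B C (by have := sizeOf_opt ha; omega)
      have iB : ∀ b ∈ B.opts, (MisereP (add (add A b) C) ↔ MisereP (add A (add b C))) :=
        fun b hb => ih A b C (by have := sizeOf_opt hb; omega)
      have iC : ∀ c ∈ C.opts, (MisereP (add (add A B) c) ↔ MisereP (add A (add B c))) :=
        fun c hc => ih A B c (by have := sizeOf_opt hc; omega)
      rw [MisereP_add, MisereP_add, opts_add, opts_add]
      simp only [List.forall_mem_append, List.forall_mem_map, ne_eq, List.append_eq_nil_iff,
        List.map_eq_nil_iff, not_and, not_or]
      constructor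
      · rintro ⟨h1, ⟨h2, h3⟩, h4⟩
        refine ⟨by tauto, fun a ha hp => h2 a ha ((iA a ha).2 hp),
          fun b hb hp => h3 b hb ((iB b hb).2 hp), fun c hc hp => h4 c hc ((iC c hc).2 hp)⟩
      · rintro ⟨h1, h2, h3, h4⟩
        refine ⟨by tauto, ⟨fun a ha hp => h2 a ha ((iA a ha).1 hp),
          fun b hb hp => h3 b hb ((iB b hb).1 hp)⟩, fun c hc hp => h4 c hc ((iC c hc).1 hp)⟩
  exact key _ A B C le_rfl

theorem p_add_add_comm (A B X : IGame) :
    MisereP (add A (add B X)) ↔ MisereP (add B (add A X)) := by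
  have key : ∀ n A B X, sizeOf A + sizeOf B + sizeOf X ≤ n →
      (MisereP (add A (add B X)) ↔ MisereP (add B (add A X))) := by
    intro n
    induction n with
    | zero =>
      intro A B X h
      have := one_le_sizeOf A; have := one_le_sizeOf B; have := one_le_sizeOf X; omega
    | succ n ih =>
      intro A B X h
      have iA : ∀ a ∈ A.opts, (MisereP (add a (add B X)) ↔ MisereP (add B (add a X))) :=
        fun a ha => ih a B X (by have := sizeOf_opt ha; omega)
      have iB : ∀ b ∈ B.opts, (MisereP (add A (add b X)) ↔ MisereP (add b (add A X))) :=
        fun b hb => ih A b X (by have := sizeOf_opt hb; omega)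
      have iX : ∀ x ∈ X.opts, (MisereP (add A (add B x)) ↔ MisereP (add B (add A x))) :=
        fun x hx => ih A B x (by have := sizeOf_opt hx; omega)
      rw [MisereP_add, MisereP_add, opts_add, opts_add]
      simp only [List.forall_mem_append, List.forall_mem_map, ne_eq, List.append_eq_nil_iff,
        List.map_eq_nil_iff, not_and, not_or]
      constructor
      · rintro ⟨h1, h2, h3, h4⟩
        refine ⟨by tauto, fun b hb hp => h3 b hb ((iB b hb).2 hp),
          fun a ha hp => h2 a ha ((iA a ha).2 hp), fun x hx hp => h4 x hx ((iX x hx).2 hp)⟩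
      · rintro ⟨h1, h2, h3, h4⟩
        refine ⟨by tauto, fun a ha hp => h3 a ha ((iA a ha).1 hp),
          fun b hb hp => h2 b hb ((iB b hb).1 hp), fun x hx hp => h4 x hx ((iX x hx).1 hp)⟩
  exact key _ A B X le_rfl
theorem p_add_comm (A B : IGame) : MisereP (add A B) ↔ MisereP (add B A) := by
  have key : ∀ n A B, sizeOf A + sizeOf B ≤ n →
      (MisereP (add A B) ↔ MisereP (add B A)) := by
    intro n
    induction n with
    | zero =>
      intro A B h
      have := one_le_sizeOf A; have := one_le_sizeOf B; omega
    | succ n ih =>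
      intro A B h
      have iA : ∀ a ∈ A.opts, (MisereP (add a B) ↔ MisereP (add B a)) :=
        fun a ha => ih a B (by have := sizeOf_opt ha; omega)
      have iB : ∀ b ∈ B.opts, (MisereP (add A b) ↔ MisereP (add b A)) :=
        fun b hb => ih A b (by have := sizeOf_opt hb; omega)
      rw [MisereP_add, MisereP_add]
      constructor
      · rintro ⟨h1, h2, h3⟩
        exact ⟨h1.symm, fun b hb hp => h3 b hb ((iB b hb).2 hp),
          fun a ha hp => h2 a ha ((iA a ha).2 hp)⟩
      · rintro ⟨h1, h2, h3⟩
        exact ⟨h1.symm, fun a ha hp => h3 a ha ((iA a ha).1 hp),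
          fun b hb hp => h2 b hb ((iB b hb).1 hp)⟩
  exact key _ A B le_rfl

/-- rewrite on the right of an `add` under a context, using an `MEquiv`. -/
theorem p_congr_r (A : IGame) {Y Z : IGame} (h : MEquiv Y Z) :
    MisereP (add A Y) ↔ MisereP (add A Z) :=
  (p_add_comm A Y).trans ((h A).trans (p_add_comm Z A))

theorem p_assoc4 (A B C X : IGame) :
    MisereP (add (add (add A B) C) X) ↔ MisereP (add (add A (add B C)) X) := by
  have key : ∀ n A B C X, sizeOf A + sizeOf B + sizeOf C + sizeOf X ≤ n →
      (MisereP (add (add (add A B) C) X) ↔ MisereP (add (add A (add B C)) X)) := by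
    intro n
    induction n with
    | zero =>
      intro A B C X h
      have := one_le_sizeOf A; have := one_le_sizeOf B
      have := one_le_sizeOf C; have := one_le_sizeOf X; omega
    | succ n ih =>
      intro A B C X h
      have iA : ∀ a ∈ A.opts, (MisereP (add (add (add a B) C) X) ↔
          MisereP (add (add a (add B C)) X)) :=
        fun a ha => ih a B C X (by have := sizeOf_opt ha; omega)
      have iB : ∀ b ∈ B.opts, (MisereP (add (add (add A b) C) X) ↔
          MisereP (add (add A (add b C)) X)) :=
        fun b hb => ih A b C X (by have := sizeOf_opt hb; omega)
      have iC : ∀ c ∈ C.opts, (MisereP (add (add (add A B) c) X) ↔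
          MisereP (add (add A (add B c)) X)) :=
        fun c hc => ih A B c X (by have := sizeOf_opt hc; omega)
      have iX : ∀ x ∈ X.opts, (MisereP (add (add (add A B) C) x) ↔
          MisereP (add (add A (add B C)) x)) :=
        fun x hx => ih A B C x (by have := sizeOf_opt hx; omega)
      rw [MisereP_add, MisereP_add]
      simp only [opts_add, List.map_append, List.map_map, List.forall_mem_append,
        List.forall_mem_map, Function.comp, ne_eq, List.append_eq_nil_iff,
        List.map_eq_nil_iff, not_and, not_or]
      constructor
      · rintro ⟨h1, ⟨⟨hA, hB⟩, hC⟩, hX⟩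
        exact ⟨by tauto, ⟨fun a ha hp => hA a ha ((iA a ha).2 hp),
          fun b hb hp => hB b hb ((iB b hb).2 hp),
          fun c hc hp => hC c hc ((iC c hc).2 hp)⟩,
          fun x hx hp => hX x hx ((iX x hx).2 hp)⟩
      · rintro ⟨h1, ⟨hA, hB, hC⟩, hX⟩
        exact ⟨by tauto, ⟨⟨fun a ha hp => hA a ha ((iA a ha).1 hp),
          fun b hb hp => hB b hb ((iB b hb).1 hp)⟩,
          fun c hc hp => hC c hc ((iC c hc).1 hp)⟩,
          fun x hx hp => hX x hx ((iX x hx).1 hp)⟩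
  exact key _ A B C X le_rfl

theorem mequiv_assoc (A B C : IGame) :
    MEquiv (add (add A B) C) (add A (add B C)) :=
  fun X => p_assoc4 A B C X

theorem mequiv_add_right {A B : IGame} (h : MEquiv A B) (C : IGame) :
    MEquiv (add A C) (add B C) := fun X => by
  rw [p_add_assoc, p_add_assoc]; exact h (add C X)

theorem mequiv_add_comm (A B : IGame) : MEquiv (add A B) (add B A) := fun X => by
  rw [p_add_assoc, p_add_assoc]; exact p_add_add_comm A B X

theorem mequiv_add_left {A B : IGame} (h : MEquiv A B) (C : IGame) :
    MEquiv (add C A) (add C B) :=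
  mequiv_trans (mequiv_add_comm C A) (mequiv_trans (mequiv_add_right h C)
    (mequiv_add_comm B C))

theorem mequiv_zero_add (H : IGame) : MEquiv (add zero H) H := fun X =>
  (p_add_assoc zero H X).trans (p_zero_add (add H X))

theorem mequiv_add_zero (H : IGame) : MEquiv (add H zero) H :=
  mequiv_trans (mequiv_add_comm H zero) (mequiv_zero_add H)

theorem mequiv_zero_iff {A : IGame} :
    MEquiv A zero ↔ ∀ X, (MisereP (add A X) ↔ MisereP X) := by
  constructor
  · intro h X; exact (h X).trans (p_zero_add X)
  · intro h X; exact (h X).trans (p_zero_add X).symm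
theorem not_p_zero : ¬ MisereP zero := by
  rw [zero, MisereP_mk]; simp

theorem p_star : MisereP star := by
  rw [star, MisereP_mk]
  refine ⟨by simp, ?_⟩
  simpa using not_p_zero

theorem opts_star : star.opts = [zero] := rfl

theorem p_star_add (X : IGame) :
    MisereP (add star X) ↔ ¬ MisereP X ∧ ∀ x ∈ X.opts, ¬ MisereP (add star x) := by
  rw [MisereP_add, opts_star]
  constructor
  · rintro ⟨-, h2, h3⟩
    refine ⟨fun hp => h2 zero (by simp) ((p_zero_add X).2 hp), h3⟩
  · rintro ⟨h1, h2⟩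
    refine ⟨by simp, ?_, h2⟩
    intro x hx
    simp at hx
    subst hx
    exact fun hp => h1 ((p_zero_add X).1 hp)

theorem star_aux {X : IGame} (hQ : ∀ x ∈ X.opts, ¬ MisereP x) :
    ¬ MisereP (add star X) ↔ X.opts ≠ [] := by
  constructor
  · intro hns hc
    obtain ⟨l⟩ := X
    have : l = [] := hc
    subst this
    apply hns
    rw [p_star_add]
    exact ⟨not_p_zero, by simp [opts]⟩
  · intro hne hp
    rw [p_star_add] at hp
    exact hp.1 ((MisereP_iff X).2 ⟨hne, hQ⟩)

theorem p_star_star (X : IGame) : MisereP (add star (add star X)) ↔ MisereP X := by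
  have key : ∀ n X, sizeOf X ≤ n → (MisereP (add star (add star X)) ↔ MisereP X) := by
    intro n
    induction n with
    | zero => intro X hX; have := one_le_sizeOf X; omega
    | succ n ih =>
      intro X hX
      have iX : ∀ x ∈ X.opts, (MisereP (add star (add star x)) ↔ MisereP x) :=
        fun x hx => ih x (by have := sizeOf_opt hx; omega)
      have lhs_iff : MisereP (add star (add star X)) ↔
          (¬ MisereP (add star X) ∧ ∀ x ∈ X.opts, ¬ MisereP x) := by
        rw [p_star_add (add star X)]
        have hopts : (add star X).opts = add zero X :: X.opts.map (fun y => add star y) := by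
          rw [opts_add, opts_star]; rfl
        rw [hopts]
        simp only [List.forall_mem_cons, List.forall_mem_map]
        constructor
        · rintro ⟨h1, h2, h3⟩
          exact ⟨h1, fun x hx hp => h3 x hx ((iX x hx).2 hp)⟩
        · rintro ⟨h1, h3⟩
          refine ⟨h1, ?_, fun x hx hp => h3 x hx ((iX x hx).1 hp)⟩
          intro hp
          rw [p_add_add_comm star zero X] at hp
          exact h1 ((p_zero_add (add star X)).1 hp)
      rw [lhs_iff]
      by_cases hQ : ∀ x ∈ X.opts, ¬ MisereP x
      · rw [star_aux hQ, MisereP_iff]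
      · constructor
        · rintro ⟨-, h⟩
          exact absurd h hQ
        · intro hp
          exact absurd ((MisereP_iff X).1 hp).2 hQ
  exact key _ X le_rfl

theorem mequiv_star_star : MEquiv (add star star) zero := fun X =>
  ((p_add_assoc star star X).trans (p_star_star X)).trans (p_zero_add X).symm
theorem opts_star2 : star2.opts = [zero, star] := rfl

theorem p_star2_add (X : IGame) :
    MisereP (add star2 X) ↔ ¬ MisereP X ∧ ¬ MisereP (add star X) ∧
      ∀ x ∈ X.opts, ¬ MisereP (add star2 x) := by
  rw [MisereP_add, opts_star2]
  simp only [List.forall_mem_cons]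
  constructor
  · rintro ⟨-, ⟨hz, hs, -⟩, h3⟩
    exact ⟨fun hp => hz ((p_zero_add X).2 hp), hs, h3⟩
  · rintro ⟨h1, h2, h3⟩
    exact ⟨by simp, ⟨fun hp => h1 ((p_zero_add X).1 hp), h2,
      List.forall_mem_nil _⟩, h3⟩

theorem mequiv_star_of_opts {G : IGame} (hne : G.opts ≠ [])
    (h0 : ∀ g ∈ G.opts, MEquiv g zero) : MEquiv G star := by
  have key : ∀ n X, sizeOf X ≤ n → (MisereP (add G X) ↔ MisereP (add star X)) := by
    intro n
    induction n with
    | zero => intro X hX; have := one_le_sizeOf X; omega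
    | succ n ih =>
      intro X hX
      have iX : ∀ x ∈ X.opts, (MisereP (add G x) ↔ MisereP (add star x)) :=
        fun x hx => ih x (by have := sizeOf_opt hx; omega)
      rw [MisereP_add, p_star_add]
      constructor
      · rintro ⟨-, h2, h3⟩
        obtain ⟨g, hg⟩ := List.exists_mem_of_ne_nil _ hne
        refine ⟨fun hp => h2 g hg ?_, fun x hx hp => h3 x hx ((iX x hx).2 hp)⟩
        exact (mequiv_zero_iff.1 (h0 g hg) X).2 hp
      · rintro ⟨h1, h2⟩
        refine ⟨Or.inl hne, fun g hg hp => h1 ((mequiv_zero_iff.1 (h0 g hg) X).1 hp),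
          fun x hx hp => h2 x hx ((iX x hx).1 hp)⟩
  exact fun X => key _ X le_rfl

theorem mequiv_zero_of_opts {G : IGame} (hne : G.opts ≠ [])
    (hs : ∀ g ∈ G.opts, MEquiv g star) : MEquiv G zero := by
  rw [mequiv_zero_iff]
  have key : ∀ n X, sizeOf X ≤ n → (MisereP (add G X) ↔ MisereP X) := by
    intro n
    induction n with
    | zero => intro X hX; have := one_le_sizeOf X; omega
    | succ n ih =>
      intro X hX
      have iX : ∀ x ∈ X.opts, (MisereP (add G x) ↔ MisereP x) :=
        fun x hx => ih x (by have := sizeOf_opt hx; omega)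
      have lhs_iff : MisereP (add G X) ↔
          (¬ MisereP (add star X) ∧ ∀ x ∈ X.opts, ¬ MisereP x) := by
        rw [MisereP_add]
        constructor
        · rintro ⟨-, h2, h3⟩
          obtain ⟨g, hg⟩ := List.exists_mem_of_ne_nil _ hne
          exact ⟨fun hp => h2 g hg ((hs g hg X).2 hp),
            fun x hx hp => h3 x hx ((iX x hx).2 hp)⟩
        · rintro ⟨h1, h2⟩
          exact ⟨Or.inl hne, fun g hg hp => h1 ((hs g hg X).1 hp),
            fun x hx hp => h2 x hx ((iX x hx).1 hp)⟩
      rw [lhs_iff]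
      by_cases hQ : ∀ x ∈ X.opts, ¬ MisereP x
      · rw [star_aux hQ, MisereP_iff]
      · constructor
        · rintro ⟨-, h⟩
          exact absurd h hQ
        · intro hp
          exact absurd ((MisereP_iff X).1 hp).2 hQ
  exact fun X => key _ X le_rfl

theorem mequiv_star2_of_opts {G : IGame}
    (h01 : ∀ g ∈ G.opts, MEquiv g zero ∨ MEquiv g star)
    (h0 : ∃ g ∈ G.opts, MEquiv g zero) (h1 : ∃ g ∈ G.opts, MEquiv g star) :
    MEquiv G star2 := by
  have key : ∀ n X, sizeOf X ≤ n → (MisereP (add G X) ↔ MisereP (add star2 X)) := by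
    intro n
    induction n with
    | zero => intro X hX; have := one_le_sizeOf X; omega
    | succ n ih =>
      intro X hX
      have iX : ∀ x ∈ X.opts, (MisereP (add G x) ↔ MisereP (add star2 x)) :=
        fun x hx => ih x (by have := sizeOf_opt hx; omega)
      rw [MisereP_add, p_star2_add]
      constructor
      · rintro ⟨-, h2, h3⟩
        obtain ⟨g0, hg0, e0⟩ := h0
        obtain ⟨g1, hg1, e1⟩ := h1
        exact ⟨fun hp => h2 g0 hg0 ((mequiv_zero_iff.1 e0 X).2 hp),
          fun hp => h2 g1 hg1 ((e1 X).2 hp),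
          fun x hx hp => h3 x hx ((iX x hx).2 hp)⟩
      · rintro ⟨hz, hs, h2⟩
        obtain ⟨g0, hg0, -⟩ := h0
        refine ⟨Or.inl (List.ne_nil_of_mem hg0), fun g hg hp => ?_,
          fun x hx hp => h2 x hx ((iX x hx).1 hp)⟩
        rcases h01 g hg with e | e
        · exact hz ((mequiv_zero_iff.1 e X).1 hp)
        · exact hs ((e X).1 hp)
  exact fun X => key _ X le_rfl
theorem exists_link_witness (A : IGame) (hA : ¬ MEquiv A zero) :
    ∃ W, MisereP (add A W) ∧ ¬ MisereP W := by
  have key : ∀ n A, sizeOf A ≤ n → ¬ MEquiv A zero →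
      ∃ W, MisereP (add A W) ∧ ¬ MisereP W := by
    intro n
    induction n with
    | zero => intro A h; have := one_le_sizeOf A; omega
    | succ n ih =>
      intro A hsize hA
      rw [MEquiv] at hA
      push_neg at hA
      obtain ⟨X, hX⟩ := hA
      rcases hX with ⟨h1, h2⟩ | ⟨h1, h2⟩
      · exact ⟨X, h1, fun c => h2 ((p_zero_add X).2 c)⟩
      · -- hard case : ¬ p (A+X), p X
        have hpAX : ¬ MisereP (add A X) := h1
        have hpX : MisereP X := (p_zero_add X).1 h2
        have hopt : ∀ a ∈ A.opts, ∃ w,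
            (MisereP (add a w) ∧ ¬ MisereP w) ∨ (MEquiv a zero ∧ w = X) := by
          intro a ha
          by_cases h : MEquiv a zero
          · exact ⟨X, Or.inr ⟨h, rfl⟩⟩
          · obtain ⟨w, hw⟩ := ih a (by have := sizeOf_opt ha; omega) h
            exact ⟨w, Or.inl hw⟩
        choose f hf using hopt
        refine ⟨mk (X :: A.opts.attach.map fun a => f a.1 a.2), ?_, ?_⟩
        · have hnW : ¬ MisereP (mk (X :: A.opts.attach.map fun a => f a.1 a.2)) := by
            rw [MisereP_mk]
            rintro ⟨-, hall⟩
            exact hall X (List.mem_cons_self) hpX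
          rw [MisereP_add]
          refine ⟨Or.inr (by simp [opts]), ?_, ?_⟩
          · intro a ha hp
            rcases hf a ha with ⟨hw1, hw2⟩ | ⟨he, -⟩
            · have hmem : f a ha ∈ (mk (X :: A.opts.attach.map fun a => f a.1 a.2)).opts :=
                List.mem_cons_of_mem _ (List.mem_map.2 ⟨⟨a, ha⟩, List.mem_attach _ _, rfl⟩)
              exact not_MisereP_add_right hmem hw1 hp
            · exact hnW ((mequiv_zero_iff.1 he _).1 hp)
          · intro w hw hp
            rcases List.mem_cons.1 hw with rfl | hw'
            · exact hpAX hp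
            · obtain ⟨⟨a, ha⟩, -, rfl⟩ := List.mem_map.1 hw'
              rcases hf a ha with ⟨hw1, -⟩ | ⟨-, heq⟩
              · exact not_MisereP_add_left ha hw1 hp
              · rw [heq] at hp
                exact hpAX hp
        · rw [MisereP_mk]
          rintro ⟨-, hall⟩
          exact hall X (List.mem_cons_self) hpX
  exact key _ A le_rfl hA

theorem linked_zero_of_no_zero_opt (T : IGame)
    (h : ∀ t ∈ T.opts, ¬ MEquiv t zero) :
    ∃ S, MisereP S ∧ MisereP (add T S) := by
  by_cases hne : T.opts = []
  · refine ⟨star, p_star, ?_⟩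
    obtain ⟨l⟩ := T
    have : l = [] := hne
    subst this
    exact (p_zero_add star).2 p_star
  · have hopt : ∀ t ∈ T.opts, ∃ w, MisereP (add t w) ∧ ¬ MisereP w :=
      fun t ht => exists_link_witness t (h t ht)
    choose f hf using hopt
    refine ⟨mk (T.opts.attach.map fun t => f t.1 t.2), ?_, ?_⟩
    · rw [MisereP_mk]
      refine ⟨by simpa using hne, ?_⟩
      intro s hs
      obtain ⟨⟨t, ht⟩, -, rfl⟩ := List.mem_map.1 hs
      exact (hf t ht).2
    · rw [MisereP_add]
      refine ⟨Or.inl hne, ?_, ?_⟩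
      · intro t ht hp
        have hmem : f t ht ∈ (mk (T.opts.attach.map fun t => f t.1 t.2)).opts :=
          List.mem_map.2 ⟨⟨t, ht⟩, List.mem_attach _ _, rfl⟩
        exact not_MisereP_add_right hmem (hf t ht).1 hp
      · intro s hs hp
        obtain ⟨⟨t, ht⟩, -, rfl⟩ := List.mem_map.1 hs
        exact not_MisereP_add_left ht (hf t ht).1 hp
theorem not_p_star2 : ¬ MisereP star2 := by
  rw [star2, MisereP_mk]
  rintro ⟨-, h⟩
  exact h star (by simp) p_star

theorem p_add_star_zero : MisereP (add star zero) := (p_add_zero star).2 p_star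

theorem not_mequiv_star_zero : ¬ MEquiv star zero := fun h =>
  not_p_zero ((mequiv_zero_iff.1 h zero).1 p_add_star_zero)

theorem not_p_star2_star : ¬ MisereP (add star2 star) :=
  not_MisereP_add_left (show zero ∈ star2.opts by simp [opts_star2])
    ((p_zero_add star).2 p_star)

theorem not_mequiv_star2_zero : ¬ MEquiv star2 zero := fun h =>
  not_p_star2_star ((mequiv_zero_iff.1 h star).2 p_star)

theorem p_ss_s : MisereP (add (add star star) star) := by
  rw [p_add_assoc]
  exact (p_star_star star).2 p_star

theorem not_p_s2s_s : ¬ MisereP (add (add star2 star) star) := by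
  apply not_MisereP_add_left (x := add star star) _ p_ss_s
  rw [opts_add, opts_star2]
  exact List.mem_append_left _ (by simp)

theorem not_mequiv_s2s_zero : ¬ MEquiv (add star2 star) zero := fun h =>
  not_p_s2s_s ((mequiv_zero_iff.1 h star).2 p_star)

theorem p_s2s2 : MisereP (add star2 star2) := by
  rw [MisereP_add, opts_star2]
  refine ⟨by simp, ?_, ?_⟩
  · intro x hx
    rcases List.mem_cons.1 hx with rfl | hx'
    · exact fun hp => not_p_star2 ((p_zero_add star2).1 hp)
    · simp only [List.mem_singleton] at hx'
      subst hx'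
      exact not_MisereP_add_right (show zero ∈ star2.opts by simp [opts_star2])
        p_add_star_zero
  · intro y hy
    rcases List.mem_cons.1 hy with rfl | hy'
    · exact fun hp => not_p_star2 ((p_add_zero star2).1 hp)
    · simp only [List.mem_singleton] at hy'
      subst hy'
      exact not_p_star2_star

theorem not_p_s2s2_s : ¬ MisereP (add (add star2 star2) star) :=
  not_MisereP_add_right (show zero ∈ star.opts by simp [opts_star])
    ((p_add_zero _).2 p_s2s2)

theorem not_mequiv_s2s2_zero : ¬ MEquiv (add star2 star2) zero := fun h =>
  not_p_s2s2_s ((mequiv_zero_iff.1 h star).2 p_star)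

/-- If `A + B = 0` and `B` is equal to `0` or `*`, then so is `A`. -/
theorem partner_unit {A B : IGame} (h : MEquiv (add A B) zero) :
    (MEquiv B zero ∨ MEquiv B star) → (MEquiv A zero ∨ MEquiv A star) := by
  rintro (h0 | h1)
  · left
    rw [mequiv_zero_iff]
    intro X
    calc MisereP (add A X) ↔ MisereP (add B (add A X)) :=
          ((mequiv_zero_iff.1 h0 _)).symm
      _ ↔ MisereP (add A (add B X)) := p_add_add_comm B A X
      _ ↔ MisereP (add (add A B) X) := (p_add_assoc A B X).symm
      _ ↔ MisereP X := mequiv_zero_iff.1 h X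
  · right
    have hBB : MEquiv (add B B) zero :=
      mequiv_trans (mequiv_trans (mequiv_add_right h1 B) (mequiv_add_left h1 star))
        mequiv_star_star
    exact mequiv_trans (mequiv_trans (mequiv_trans (mequiv_trans
      (mequiv_symm (mequiv_add_zero A))
      (mequiv_add_left (mequiv_symm hBB) A))
      (mequiv_symm (mequiv_assoc A B B)))
      (mequiv_add_right h B))
      (mequiv_trans (mequiv_zero_add B) h1)

theorem classify_opts (K : IGame) (hne : K.opts ≠ [])
    (hk : ∀ k ∈ K.opts, MEquiv k zero ∨ MEquiv k star) :
    MEquiv K star ∨ MEquiv K zero ∨ MEquiv K star2 := by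
  by_cases h0 : ∃ k ∈ K.opts, MEquiv k zero
  · by_cases h1 : ∃ k ∈ K.opts, MEquiv k star
    · exact Or.inr (Or.inr (mequiv_star2_of_opts hk h0 h1))
    · refine Or.inl (mequiv_star_of_opts hne fun g hg => ?_)
      rcases hk g hg with e | e
      · exact e
      · exact absurd ⟨g, hg, e⟩ h1
  · refine Or.inr (Or.inl (mequiv_zero_of_opts hne fun g hg => ?_))
    rcases hk g hg with e | e
    · exact absurd ⟨g, hg, e⟩ h0
    · exact e
theorem parts_of_zero_aux :
    ∀ n (G H : IGame), sizeOf G + sizeOf H ≤ n → MEquiv (add G H) zero →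
      (MEquiv G zero ∨ MEquiv G star) ∧ (MEquiv H zero ∨ MEquiv H star) := by
  intro n
  induction n with
  | zero =>
    intro G H hsz
    have := one_le_sizeOf G; have := one_le_sizeOf H; omega
  | succ n ih =>
    intro G H hsz h
    have hGH : ∀ S, MisereP (add (add G H) S) ↔ MisereP S := mequiv_zero_iff.1 h
    have h' : MEquiv (add H G) zero := mequiv_trans (mequiv_add_comm H G) h
    -- descent facts
    have descendG : ∀ G' ∈ G.opts,
        (∃ G'' ∈ G'.opts, MEquiv (add G'' H) zero) ∨
        (∃ H' ∈ H.opts, MEquiv (add G' H') zero) := by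
      intro G' hG'
      by_contra hc
      push_neg at hc
      obtain ⟨hc1, hc2⟩ := hc
      have hno : ∀ t ∈ (add G' H).opts, ¬ MEquiv t zero := by
        intro t ht
        rw [opts_add] at ht
        rcases List.mem_append.1 ht with h'' | h''
        · obtain ⟨a, ha, rfl⟩ := List.mem_map.1 h''
          exact hc1 a ha
        · obtain ⟨b, hb, rfl⟩ := List.mem_map.1 h''
          exact hc2 b hb
      obtain ⟨S, hS, hTS⟩ := linked_zero_of_no_zero_opt _ hno
      have hmem : add G' H ∈ (add G H).opts := by
        rw [opts_add]
        exact List.mem_append_left _ (List.mem_map_of_mem hG')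
      exact not_MisereP_add_left hmem hTS ((hGH S).2 hS)
    have descendH : ∀ H' ∈ H.opts,
        (∃ H'' ∈ H'.opts, MEquiv (add G H'') zero) ∨
        (∃ G' ∈ G.opts, MEquiv (add G' H') zero) := by
      intro H' hH'
      by_contra hc
      push_neg at hc
      obtain ⟨hc1, hc2⟩ := hc
      have hno : ∀ t ∈ (add G H').opts, ¬ MEquiv t zero := by
        intro t ht
        rw [opts_add] at ht
        rcases List.mem_append.1 ht with h'' | h''
        · obtain ⟨a, ha, rfl⟩ := List.mem_map.1 h''
          exact hc2 a ha
        · obtain ⟨b, hb, rfl⟩ := List.mem_map.1 h''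
          exact hc1 b hb
      obtain ⟨S, hS, hTS⟩ := linked_zero_of_no_zero_opt _ hno
      have hmem : add G H' ∈ (add G H).opts := by
        rw [opts_add]
        exact List.mem_append_right _ (List.mem_map_of_mem hH')
      exact not_MisereP_add_left hmem hTS ((hGH S).2 hS)
    by_cases hA1 : ∃ G' ∈ G.opts, ∃ G'' ∈ G'.opts, MEquiv (add G'' H) zero
    · obtain ⟨G', hG', G'', hG'', he⟩ := hA1
      have hsz' : sizeOf G'' + sizeOf H ≤ n := by
        have := sizeOf_opt hG'; have := sizeOf_opt hG''; omega
      have hH := (ih G'' H hsz' he).2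
      exact ⟨partner_unit h hH, hH⟩
    by_cases hA2 : ∃ H' ∈ H.opts, ∃ H'' ∈ H'.opts, MEquiv (add G H'') zero
    · obtain ⟨H', hH', H'', hH'', he⟩ := hA2
      have hsz' : sizeOf G + sizeOf H'' ≤ n := by
        have := sizeOf_opt hH'; have := sizeOf_opt hH''; omega
      have hG := (ih G H'' hsz' he).1
      exact ⟨hG, partner_unit h' hG⟩
    have hGpair : ∀ G' ∈ G.opts, MEquiv G' zero ∨ MEquiv G' star := by
      intro G' hG'
      rcases descendG G' hG' with ⟨G'', hG'', he⟩ | ⟨H', hH', he⟩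
      · exact absurd ⟨G', hG', G'', hG'', he⟩ hA1
      · refine (ih G' H' ?_ he).1
        have := sizeOf_opt hG'; have := sizeOf_opt hH'; omega
    have hHpair : ∀ H' ∈ H.opts, MEquiv H' zero ∨ MEquiv H' star := by
      intro H' hH'
      rcases descendH H' hH' with ⟨H'', hH'', he⟩ | ⟨G', hG', he⟩
      · exact absurd ⟨H', hH', H'', hH'', he⟩ hA2
      · refine (ih G' H' ?_ he).2
        have := sizeOf_opt hG'; have := sizeOf_opt hH'; omega
    by_cases hGe : G.opts = []
    · have hGz : G = zero := by
        obtain ⟨l⟩ := G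
        have : l = [] := hGe
        subst this; rfl
      subst hGz
      have hH0 : MEquiv H zero := mequiv_trans (mequiv_symm (mequiv_zero_add H)) h
      exact ⟨Or.inl (mequiv_refl zero), Or.inl hH0⟩
    by_cases hHe : H.opts = []
    · have hHz : H = zero := by
        obtain ⟨l⟩ := H
        have : l = [] := hHe
        subst this; rfl
      subst hHz
      have hG0 : MEquiv G zero := mequiv_trans (mequiv_symm (mequiv_add_zero G)) h
      exact ⟨Or.inl hG0, Or.inl (mequiv_refl zero)⟩
    have hc : ∀ {A B : IGame}, MEquiv G A → MEquiv H B → MEquiv (add A B) zero :=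
      fun {A B} eG eH =>
        mequiv_trans (mequiv_add_right (mequiv_symm eG) B)
          (mequiv_trans (mequiv_add_left (mequiv_symm eH) G) h)
    rcases classify_opts G hGe hGpair with eG | eG | eG <;>
      rcases classify_opts H hHe hHpair with eH | eH | eH
    · exact ⟨Or.inr eG, Or.inr eH⟩
    · exact absurd (mequiv_trans (mequiv_symm (mequiv_add_zero star)) (hc eG eH))
        not_mequiv_star_zero
    · exact absurd (mequiv_trans (mequiv_add_comm star2 star) (hc eG eH))
        not_mequiv_s2s_zero
    · exact absurd (mequiv_trans (mequiv_symm (mequiv_zero_add star)) (hc eG eH))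
        not_mequiv_star_zero
    · exact ⟨Or.inl eG, Or.inl eH⟩
    · exact absurd (mequiv_trans (mequiv_symm (mequiv_zero_add star2)) (hc eG eH))
        not_mequiv_star2_zero
    · exact absurd (hc eG eH) not_mequiv_s2s_zero
    · exact absurd (mequiv_trans (mequiv_symm (mequiv_add_zero star2)) (hc eG eH))
        not_mequiv_star2_zero
    · exact absurd (hc eG eH) not_mequiv_s2s2_zero
/-- The only parts of `0` are `0` and `*`. -/
theorem parts_of_zero (X Y : IGame) (h : MEquiv (add X Y) zero) :
    (MEquiv X zero ∨ MEquiv X star) ∧ (MEquiv Y zero ∨ MEquiv Y star) :=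
  parts_of_zero_aux (sizeOf X + sizeOf Y) X Y le_rfl h

end IGame
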